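/- The rational function β(z) = −(3z − 2)²/(4z³(z − 1)²(z + 2)) is a Belyi function: for every complex number z with z³(z − 1)²(z + 2) ≠ 0, if the derivative of β vanishes at z, then β(z) = 0 or β(z) = 1. -/

import Mathlib

/-- The rational function `β(z) = −(3z − 2)²/(4z³(z − 1)²(z + 2))` is a Belyi function:
all of its finite critical values lie in `{0, 1}`. -/
theorem belyi_S42_321 (β : ℂ → ℂ)
    (hβ : ∀ z, β z = -((3 * z - 2) ^ 2) / (4 * z ^ 3 * (z - 1) ^ 2 * (z + 2))) :
    ∀ z : ℂ, z ^ 3 * (z - 1) ^ 2 * (z + 2) ≠ 0 → deriv β z = 0 → β z = 0 ∨ β z = 1 := by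
  have hβfun : β = fun z => -((3 * z - 2) ^ 2) / (4 * z ^ 3 * (z - 1) ^ 2 * (z + 2)) :=
    funext hβ
  subst hβfun
  intro z hzD hderiv
  have hz : z ≠ 0 := by
    intro h; apply hzD; rw [h]; ring
  have hz1 : z - 1 ≠ 0 := by
    intro h; apply hzD; rw [sub_eq_zero] at h; rw [← h]; ring
  have hD : 4 * z ^ 3 * (z - 1) ^ 2 * (z + 2) ≠ 0 := by
    intro h; apply hzD
    have h' : (4 : ℂ) * (z ^ 3 * (z - 1) ^ 2 * (z + 2)) = 0 := by linear_combination h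
    exact (mul_eq_zero.mp h').resolve_left (by norm_num)
  have hf : HasDerivAt (fun z : ℂ => -((3 * z - 2) ^ 2)) (-(2 * (3 * z - 2) * 3)) z := by
    have h1 : HasDerivAt (fun z : ℂ => 3 * z - 2) 3 z := by
      simpa using ((hasDerivAt_id z).const_mul 3).sub_const 2
    simpa using (h1.fun_pow 2).fun_neg
  have hg : HasDerivAt (fun z : ℂ => 4 * z ^ 3 * (z - 1) ^ 2 * (z + 2))
      ((4 * (3 * z ^ 2) * (z - 1) ^ 2 + 4 * z ^ 3 * (2 * (z - 1))) * (z + 2)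
        + 4 * z ^ 3 * (z - 1) ^ 2 * 1) z := by
    have h1 : HasDerivAt (fun z : ℂ => 4 * z ^ 3) (4 * (3 * z ^ 2)) z := by
      simpa using (hasDerivAt_pow 3 z).const_mul 4
    have h2 : HasDerivAt (fun z : ℂ => (z - 1) ^ 2) (2 * (z - 1)) z := by
      simpa using ((hasDerivAt_id z).sub_const 1).fun_pow 2
    have h3 : HasDerivAt (fun z : ℂ => z + 2) 1 z := (hasDerivAt_id z).add_const 2
    exact ((h1.mul h2).mul h3)
  have hder := (hf.fun_div hg hD).deriv
  rw [hder] at hderiv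
  have hnum : -(2 * (3 * z - 2) * 3) * (4 * z ^ 3 * (z - 1) ^ 2 * (z + 2))
      - -((3 * z - 2) ^ 2) * ((4 * (3 * z ^ 2) * (z - 1) ^ 2 + 4 * z ^ 3 * (2 * (z - 1))) * (z + 2)
        + 4 * z ^ 3 * (z - 1) ^ 2 * 1) = 0 := by
    have hD2 : (4 * z ^ 3 * (z - 1) ^ 2 * (z + 2)) ^ 2 ≠ 0 := pow_ne_zero 2 hD
    exact (div_eq_zero_iff.mp hderiv).resolve_right hD2
  have hkey : (24 * z ^ 2 * (z - 1)) * ((3 * z - 2) * (2 * z ^ 3 - 3 * z + 2)) = 0 := by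
    linear_combination hnum
  have h24 : (3 * z - 2) * (2 * z ^ 3 - 3 * z + 2) = 0 := by
    have hne : (24 : ℂ) * z ^ 2 * (z - 1) ≠ 0 :=
      mul_ne_zero (mul_ne_zero (by norm_num) (pow_ne_zero 2 hz)) hz1
    exact (mul_eq_zero.mp hkey).resolve_left hne
  rcases mul_eq_zero.mp h24 with h | h
  · left
    show -((3 * z - 2) ^ 2) / (4 * z ^ 3 * (z - 1) ^ 2 * (z + 2)) = 0
    rw [h]; simp
  · right
    show -((3 * z - 2) ^ 2) / (4 * z ^ 3 * (z - 1) ^ 2 * (z + 2)) = 1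
    rw [div_eq_one_iff_eq hD]
    linear_combination -(2 * z ^ 3 - 3 * z + 2) * h
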